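/- For 0 < ε < 1, let u_ε(x) = (1+|x|^{2(α+1)})^{−ε/(1−ε)} on ℝ² with α > −1, and a_ε = −ε(α+1)/(1−ε). Then ∫_{ℝ²} |x|^{2α} (1+|x|^{2(1+α)})^{−2} u_ε(x)² |x|^{−2a_ε} dx = (π/(α+1)) Γ(1/(1−ε))² / Γ(2/(1−ε)). -/

import Mathlib

open MeasureTheory Real Set

lemma ckn_beta_interval {c : ℝ} (hc : 0 < c) :
    ∫ u in (0:ℝ)..1, u ^ (c-1) * (1-u) ^ (c-1) = Real.Gamma c ^ 2 / Real.Gamma (2*c) := by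
  have h2c : 0 < Real.Gamma (2*c) := Real.Gamma_pos_of_pos (by linarith)
  have hβ := Complex.Gamma_mul_Gamma_eq_betaIntegral (s := (c:ℂ)) (t := (c:ℂ))
    (by simpa using hc) (by simpa using hc)
  have hre : Complex.betaIntegral c c =
      ((∫ u in (0:ℝ)..1, u ^ (c-1) * (1-u) ^ (c-1) : ℝ) : ℂ) := by
    rw [Complex.betaIntegral, ← intervalIntegral.integral_ofReal]
    refine intervalIntegral.integral_congr fun x hx => ?_
    rw [uIcc_of_le zero_le_one] at hx
    have h1 : (0:ℝ) ≤ 1 - x := by linarith [hx.2]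
    rw [show ((c:ℂ)-1) = ((c-1:ℝ):ℂ) by push_cast; ring]
    rw [Complex.ofReal_mul, Complex.ofReal_cpow hx.1, Complex.ofReal_cpow h1]
    push_cast
    ring
  rw [Complex.Gamma_ofReal, show (c:ℂ)+(c:ℂ) = ((2*c:ℝ):ℂ) by push_cast; ring,
    Complex.Gamma_ofReal, hre, ← Complex.ofReal_mul, ← Complex.ofReal_mul] at hβ
  have h := Complex.ofReal_injective hβ
  rw [eq_div_iff h2c.ne', pow_two]
  linear_combination -h

lemma ckn_beta_Ioi {c : ℝ} (hc : 0 < c) :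
    ∫ t in Ioi (0:ℝ), t ^ (c-1) * (1+t) ^ (-(2*c)) = Real.Gamma c ^ 2 / Real.Gamma (2*c) := by
  have hbi := ckn_beta_interval hc
  have himg : (fun u : ℝ => u / (1-u)) '' Ioo 0 1 = Ioi 0 := by
    ext x
    constructor
    · rintro ⟨u, ⟨h0, h1⟩, rfl⟩
      exact div_pos h0 (by linarith)
    · intro hx
      have hx' : (0:ℝ) < x := hx
      refine ⟨x / (1+x), ⟨div_pos hx' (by linarith), (div_lt_one (by linarith)).mpr (by linarith)⟩, ?_⟩
      have h1x : (1:ℝ) + x ≠ 0 := by positivity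
      field_simp
      ring
  have hderiv : ∀ u ∈ Ioo (0:ℝ) 1, HasDerivWithinAt (fun u : ℝ => u / (1-u))
      (((1-u)^2)⁻¹) (Ioo (0:ℝ) 1) u := by
    intro u hu
    have h1 : (1:ℝ) - u ≠ 0 := by have := hu.2; intro h; linarith [sub_eq_zero.mp h]
    have := (hasDerivAt_id u).div ((hasDerivAt_const u (1:ℝ)).sub (hasDerivAt_id u)) h1
    refine this.hasDerivWithinAt.congr_deriv ?_
    simp only [Pi.sub_apply, id]
    field_simp
    ring
  have hinj : InjOn (fun u : ℝ => u / (1-u)) (Ioo 0 1) := by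
    intro u hu v hv h
    have h1 : (1:ℝ) - u ≠ 0 := by have := hu.2; intro h; linarith [sub_eq_zero.mp h]
    have h2 : (1:ℝ) - v ≠ 0 := by have := hv.2; intro h; linarith [sub_eq_zero.mp h]
    field_simp at h
    nlinarith [h]
  have key := integral_image_eq_integral_abs_deriv_smul measurableSet_Ioo hderiv hinj
    (fun t => t ^ (c-1) * (1+t) ^ (-(2*c)))
  rw [himg] at key
  rw [key, ← hbi, intervalIntegral.integral_of_le zero_le_one,
    MeasureTheory.integral_Ioc_eq_integral_Ioo]
  refine setIntegral_congr_fun measurableSet_Ioo fun u hu => ?_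
  have h1 : (0:ℝ) < 1 - u := by linarith [hu.2]
  have e1 : (1:ℝ) + u/(1-u) = (1-u)⁻¹ := by field_simp; ring
  have hw : (1-u) ^ (-(c-1)) * (1-u) ^ (2*c) * (1-u) ^ (-(2:ℝ)) = (1-u) ^ (c-1) := by
    rw [← Real.rpow_add h1, ← Real.rpow_add h1]
    norm_num
    ring_nf
  have habs : |((1-u)^2)⁻¹| = (1-u) ^ (-(2:ℝ)) := by
    rw [abs_of_pos (by positivity), ← Real.rpow_two, ← Real.rpow_neg h1.le]
  rw [smul_eq_mul, habs, e1, Real.div_rpow hu.1.le h1.le, Real.inv_rpow h1.le,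
    ← Real.rpow_neg h1.le, neg_neg, div_eq_mul_inv, ← Real.rpow_neg h1.le]
  linear_combination u ^ (c-1) * hw

lemma ckn_pointwise (α ε y : ℝ) (hα : -1 < α) (hε1 : ε < 1) (hy : (0:ℝ) < y) :
    y * (y ^ (2 * α) * ((1 + y ^ (2 * (1 + α))) ^ 2)⁻¹
          * ((1 + y ^ (2 * (α + 1))) ^ (-(ε / (1 - ε)))) ^ 2
          * y ^ (-(2 * (-(ε * (α + 1)) / (1 - ε)))))
      = (2*(α+1))⁻¹ * ((2*(α+1) * y ^ (2*(α+1) - 1)) •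
            ((y ^ (2*(α+1))) ^ (1/(1-ε)-1) * (1 + y ^ (2*(α+1))) ^ (-(2*(1/(1-ε)))))) := by
  have h1ε : (0:ℝ) < 1 - ε := by linarith
  have hb : (0:ℝ) < 1 + y ^ (2*(α+1)) := by positivity
  have hne : (2:ℝ)*(α+1) ≠ 0 := by intro h; nlinarith
  rw [show 2*(1+α) = 2*(α+1) by ring]
  rw [show ((1 + y ^ (2*(α+1))) ^ 2)⁻¹ = (1 + y ^ (2*(α+1))) ^ (-(2:ℝ)) by
    rw [← Real.rpow_two, ← Real.rpow_neg hb.le]]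
  rw [show ((1 + y ^ (2*(α+1))) ^ (-(ε/(1-ε)))) ^ 2 = (1 + y ^ (2*(α+1))) ^ (-(ε/(1-ε))*2) by
    rw [← Real.rpow_two, ← Real.rpow_mul hb.le]]
  rw [show ((y ^ (2*(α+1))) ^ (1/(1-ε)-1)) = y ^ (2*(α+1)*(1/(1-ε)-1)) by
    rw [← Real.rpow_mul hy.le]]
  rw [smul_eq_mul, eq_inv_mul_iff_mul_eq₀ hne]
  have hY : y * y ^ (2*α) * y ^ (-(2 * (-(ε * (α + 1)) / (1 - ε))))
      = y ^ (2*(α+1) - 1) * y ^ (2*(α+1)*(1/(1-ε)-1)) := by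
    nth_rewrite 1 [← Real.rpow_one y]
    rw [← Real.rpow_add hy, ← Real.rpow_add hy, ← Real.rpow_add hy]
    congr 1
    field_simp
    ring
  have hB : (1 + y ^ (2*(α+1))) ^ (-(2:ℝ)) * (1 + y ^ (2*(α+1))) ^ (-(ε/(1-ε))*2)
      = (1 + y ^ (2*(α+1))) ^ (-(2*(1/(1-ε)))) := by
    rw [← Real.rpow_add hb]
    congr 1
    field_simp
    ring
  linear_combination (2*(α+1)) * (((1 + y ^ (2*(α+1))) ^ (-(2:ℝ))
      * (1 + y ^ (2*(α+1))) ^ (-(ε/(1-ε))*2)) * hY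
    + (y ^ (2*(α+1) - 1) * y ^ (2*(α+1)*(1/(1-ε)-1))) * hB)

/-- For `0 < ε < 1`, `α > -1`, `u_ε(x) = (1+|x|^{2(α+1)})^{-ε/(1-ε)}` and
`a_ε = -ε(α+1)/(1-ε)`, one has
`∫_{ℝ²} |x|^{2α} (1+|x|^{2(1+α)})⁻² u_ε² |x|^{-2a_ε} dx
  = (π/(α+1)) Γ(1/(1-ε))² / Γ(2/(1-ε))`. -/
theorem ckn_normalization (α ε : ℝ) (hα : -1 < α) (hε0 : 0 < ε) (hε1 : ε < 1) :
    ∫ x : EuclideanSpace ℝ (Fin 2),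
        ‖x‖ ^ (2 * α) * ((1 + ‖x‖ ^ (2 * (1 + α))) ^ 2)⁻¹
          * ((1 + ‖x‖ ^ (2 * (α + 1))) ^ (-(ε / (1 - ε)))) ^ 2
          * ‖x‖ ^ (-(2 * (-(ε * (α + 1)) / (1 - ε))))
      = Real.pi / (α + 1) * (Real.Gamma (1 / (1 - ε))) ^ 2 / Real.Gamma (2 / (1 - ε)) := by
  have h1ε : (0:ℝ) < 1 - ε := by linarith
  have hc : (0:ℝ) < 1 / (1 - ε) := by positivity
  have hp : (0:ℝ) < 2 * (α + 1) := by linarith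
  set f : ℝ → ℝ := fun r => r ^ (2 * α) * ((1 + r ^ (2 * (1 + α))) ^ 2)⁻¹
      * ((1 + r ^ (2 * (α + 1))) ^ (-(ε / (1 - ε)))) ^ 2
      * r ^ (-(2 * (-(ε * (α + 1)) / (1 - ε)))) with hf
  have key := integral_fun_norm_addHaar (volume : Measure (EuclideanSpace ℝ (Fin 2))) f
  have hdim : Module.finrank ℝ (EuclideanSpace ℝ (Fin 2)) = 2 := by
    simp [finrank_euclideanSpace]
  rw [hdim] at key
  have hball : (volume (Metric.ball (0:EuclideanSpace ℝ (Fin 2)) 1)).toReal = π := by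
    rw [EuclideanSpace.volume_ball]
    have : Real.Gamma ((Fintype.card (Fin 2) : ℝ) / 2 + 1) = 1 := by
      norm_num [Real.Gamma_two]
    simp only [Fintype.card_fin] at this ⊢
    rw [this]
    rw [Real.sq_sqrt Real.pi_nonneg]
    norm_num [ENNReal.toReal_ofReal Real.pi_nonneg]
  have hbeta := ckn_beta_Ioi hc
  rw [show 2*(1/(1-ε)) = 2/(1-ε) by ring] at hbeta
  have hcomp := integral_comp_rpow_Ioi_of_pos
      (g := fun t : ℝ => t ^ (1/(1-ε)-1) * (1+t) ^ (-(2*(1/(1-ε))))) hp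
  have hrad : (∫ y in Ioi (0:ℝ), y * f y)
      = (2*(α+1))⁻¹ * (Real.Gamma (1/(1-ε)) ^ 2 / Real.Gamma (2/(1-ε))) := by
    have hpt : ∀ y ∈ Ioi (0:ℝ), y * f y
        = (2*(α+1))⁻¹ * ((2*(α+1) * y ^ (2*(α+1) - 1)) •
            ((y ^ (2*(α+1))) ^ (1/(1-ε)-1) * (1 + y ^ (2*(α+1))) ^ (-(2*(1/(1-ε)))))) :=
      fun y hy => ckn_pointwise α ε y hα hε1 hy
    rw [setIntegral_congr_fun measurableSet_Ioi hpt]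
    simp only [smul_eq_mul] at hcomp ⊢
    rw [MeasureTheory.integral_const_mul, hcomp]
    rw [show (∫ y in Ioi (0:ℝ), y ^ (1/(1-ε)-1) * (1+y) ^ (-(2*(1/(1-ε)))))
        = Real.Gamma (1/(1-ε)) ^ 2 / Real.Gamma (2/(1-ε)) from by
      rw [show -(2*(1/(1-ε))) = -(2/(1-ε)) by ring]
      rw [show (2:ℝ)/(1-ε) = 2*(1/(1-ε)) by ring] ; exact ckn_beta_Ioi hc]
  have hstart : (∫ x : EuclideanSpace ℝ (Fin 2),
        ‖x‖ ^ (2 * α) * ((1 + ‖x‖ ^ (2 * (1 + α))) ^ 2)⁻¹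
          * ((1 + ‖x‖ ^ (2 * (α + 1))) ^ (-(ε / (1 - ε)))) ^ 2
          * ‖x‖ ^ (-(2 * (-(ε * (α + 1)) / (1 - ε)))))
      = ∫ x : EuclideanSpace ℝ (Fin 2), f ‖x‖ := rfl
  rw [hstart, key, measureReal_def, hball]
  simp only [smul_eq_mul, nsmul_eq_mul, Nat.cast_ofNat]
  rw [show ((2:ℕ)-1) = 1 by rfl]
  simp only [pow_one]
  rw [hrad]
  have hα1 : α + 1 ≠ 0 := by intro h; linarith
  field_simp
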